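/- Let s1 ≤ s2 ≤ s3 be nonnegative integers with s1 + s2 ≤ s3. Then the number of triples (x,y,z) of nonnegative integers satisfying y+z ≤ s1, x+z ≤ s2, and x+y ≤ s3 equals (s1+1)(s1+2)(3·s2 − s1 + 3)/6. -/

import Mathlib

lemma sum_six (d : ℕ) : ∀ m : ℕ,
    6 * ∑ j ∈ Finset.range m, (d + 1 + j) * (j + 1) = m * (m + 1) * (3 * d + 2 * m + 1) := by
  intro m
  induction m with
  | zero => simp
  | succ n ih =>
      rw [Finset.sum_range_succ, Nat.mul_add, ih]
      ring

/-- Special case of the three-point count where `x + y ≤ s3` is automatic. -/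
theorem three_point_count_easy (s1 s2 s3 : ℕ) (h12 : s1 ≤ s2) (h23 : s2 ≤ s3)
    (h : s1 + s2 ≤ s3) :
    (Nat.card {t : ℕ × ℕ × ℕ //
        t.2.1 + t.2.2 ≤ s1 ∧ t.1 + t.2.2 ≤ s2 ∧ t.1 + t.2.1 ≤ s3} : ℚ)
      = ((s1 : ℚ) + 1) * ((s1 : ℚ) + 2) * (3 * (s2 : ℚ) - (s1 : ℚ) + 3) / 6 := by
  set F : Finset (ℕ × ℕ × ℕ) := (Finset.range (s1 + 1)).biUnion
    (fun z => ((Finset.range (s2 + 1 - z)) ×ˢ (Finset.range (s1 + 1 - z))).image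
      (fun p => (p.1, p.2, z))) with hF
  have hS : {t : ℕ × ℕ × ℕ |
      t.2.1 + t.2.2 ≤ s1 ∧ t.1 + t.2.2 ≤ s2 ∧ t.1 + t.2.1 ≤ s3} = ↑F := by
    ext ⟨x, y, z⟩
    simp only [Set.mem_setOf_eq, hF, Finset.mem_coe,
      Finset.mem_biUnion, Finset.mem_range, Finset.mem_image, Finset.mem_product,
      Prod.exists, Prod.mk.injEq]
    constructor
    · rintro ⟨h1, h2, h3⟩
      exact ⟨z, by omega, x, y, ⟨by omega, by omega⟩, rfl, rfl, rfl⟩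
    · rintro ⟨w, hw, a, b, ⟨ha, hb⟩, rfl, rfl, rfl⟩
      omega
  have hcard : Nat.card {t : ℕ × ℕ × ℕ //
      t.2.1 + t.2.2 ≤ s1 ∧ t.1 + t.2.2 ≤ s2 ∧ t.1 + t.2.1 ≤ s3} = F.card := by
    rw [← Set.ncard_coe_finset, ← hS]
    exact Nat.card_coe_set_eq _
  have hinj : ∀ z : ℕ, Function.Injective (fun p : ℕ × ℕ => (p.1, p.2, z)) := by
    intro z p q hpq
    simp only [Prod.mk.injEq] at hpq
    exact Prod.ext hpq.1 hpq.2.1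
  have hFcard : F.card = ∑ z ∈ Finset.range (s1 + 1), (s2 + 1 - z) * (s1 + 1 - z) := by
    rw [hF, Finset.card_biUnion]
    · refine Finset.sum_congr rfl fun z _ => ?_
      rw [Finset.card_image_of_injective _ (hinj z), Finset.card_product,
        Finset.card_range, Finset.card_range]
    · intro a _ b _ hab
      simp only [Function.onFun]
      rw [Finset.disjoint_left]
      rintro ⟨x, y, z⟩ hxa hxb
      simp only [Finset.mem_image, Finset.mem_product, Prod.exists,
        Prod.mk.injEq] at hxa hxb
      obtain ⟨_, _, _, _, _, rfl⟩ := hxa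
      obtain ⟨_, _, _, _, _, h2⟩ := hxb
      exact hab h2.symm
  have hreflect : ∑ z ∈ Finset.range (s1 + 1), (s2 + 1 - z) * (s1 + 1 - z)
      = ∑ j ∈ Finset.range (s1 + 1), ((s2 - s1) + 1 + j) * (j + 1) := by
    rw [← Finset.sum_range_reflect (fun z => (s2 + 1 - z) * (s1 + 1 - z)) (s1 + 1)]
    refine Finset.sum_congr rfl fun j hj => ?_
    simp only [Finset.mem_range] at hj
    congr 1 <;> omega
  have key : 6 * Nat.card {t : ℕ × ℕ × ℕ //
      t.2.1 + t.2.2 ≤ s1 ∧ t.1 + t.2.2 ≤ s2 ∧ t.1 + t.2.1 ≤ s3}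
      = (s1 + 1) * (s1 + 2) * (3 * (s2 - s1) + 2 * (s1 + 1) + 1) := by
    rw [hcard, hFcard, hreflect, sum_six]
  have keyQ := congrArg (Nat.cast : ℕ → ℚ) key
  push_cast [h12] at keyQ
  rw [eq_div_iff (by norm_num : (6 : ℚ) ≠ 0)]
  linarith
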